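/- Suppose each P*†_s (for s ∈ S) satisfies P*†_s(X_0 = s) = 1 with Z_0 uniform on R_s under P*†_s (i.e., P*†_s(X_0 = s, Z_0 ∈ R') = |R' ∩ R_s|/|R_s| for Borel R' ⊆ [0,1]), P*†_s(𝒯 < ∞) = 1, E*†_s(𝒯) < ∞, and regenerates at 𝒯 with restart laws (P*†_s : s ∈ S). Let π† = (π†_s : s ∈ S) be strictly positive with ∑_{s∈S} π†_s · E*†_s(𝒯) = 1, and define the probability measure ℙ*† on K^ℕ by ℙ*†(B) = ∑_{s∈S} π†_s ∑_{n≥0} P*†_s({𝒯 > n} ∩ Θ_n^{-1}B). Then ℙ*† is stationary (invariant under the shift Θ_1) if and only if π† is invariant for the stochastic matrix Q† = (q†_{s s'}) with q†_{s s'} = P*†_s(X_𝒯 = s'), that is, π†_s = ∑_{s'∈S} π†_{s'} q†_{s' s} for every s ∈ S. -/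

import Mathlib

open MeasureTheory Filter
open scoped ENNReal NNReal ENat

variable {I : Type*} [MeasurableSpace I]

/-- The shift map `Θ_q` on `K^ℕ` where `K = I × ℝ`. -/
def shiftK (q : ℕ) (w : ℕ → I × ℝ) : ℕ → I × ℝ := fun n => w (n + q)

/-- The hitting time of a different class in the random model:
`𝒯(w) = inf {n > 0 : 𝒳_n(w) ∈ V \ 𝒞(𝒳_0(w))}` (with `inf ∅ = ∞`), where
`V = ⋃_{s ∈ S} {s} × R_s` and `𝒞(s, r) = ⋃_{s' ∈ C(s)} {s'} × R_{s'}`. -/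
noncomputable def hitTK (S : Finset I) (sim : I → I → Prop) (Rs : I → Set ℝ)
    (w : ℕ → I × ℝ) : ℕ∞ :=
  sInf ((fun n : ℕ => (n : ℕ∞)) ''
    {n : ℕ | 0 < n ∧ (w n).1 ∈ S ∧ (w n).2 ∈ Rs ((w n).1) ∧ ¬ sim ((w 0).1) ((w n).1)})

/-- The expectation `E(𝒯)` of the hitting time `𝒯` under `P`. -/
noncomputable def hitETK (S : Finset I) (sim : I → I → Prop) (Rs : I → Set ℝ)
    (P : Measure (ℕ → I × ℝ)) : ℝ≥0∞ :=
  ∫⁻ w, (hitTK S sim Rs w : ℝ≥0∞) ∂P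

/-- The measure `ℙ†(B) = ∑_{s ∈ S} π†_s ∑_{n ≥ 0} P†_s({𝒯 > n} ∩ Θ_n⁻¹ B)` on `K^ℕ`. -/
noncomputable def lawPK (S : Finset I) (sim : I → I → Prop) (Rs : I → Set ℝ) (π : I → ℝ≥0)
    (Pd : I → Measure (ℕ → I × ℝ)) : Measure (ℕ → I × ℝ) :=
  ∑ s ∈ S, π s •
    Measure.sum
      (fun n : ℕ => ((Pd s).restrict {w | (n : ℕ∞) < hitTK S sim Rs w}).map (shiftK n))

/-- The iterated hitting times of different classes in the random model:
`𝒯^0 = 0`, `𝒯^1 = 𝒯` and `𝒯^{n+1} = 𝒯^n + 𝒯 ∘ Θ_{𝒯^n}`. -/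
noncomputable def hitTKn (S : Finset I) (sim : I → I → Prop) (Rs : I → Set ℝ) :
    ℕ → (ℕ → I × ℝ) → ℕ∞
  | 0, _ => 0
  | n + 1, w =>
    let t := hitTKn S sim Rs n w
    if t = ⊤ then (⊤ : ℕ∞) else t + hitTK S sim Rs (shiftK t.toNat w)

/-- The σ-field `B_n = σ(𝒳_0, …, 𝒳_n)` generated by the first `n + 1` coordinates. -/
def coordSAK (I : Type*) [MeasurableSpace I] (n : ℕ) : MeasurableSpace (ℕ → I × ℝ) :=
  ⨆ k ≤ n, MeasurableSpace.comap (fun w : ℕ → I × ℝ => w k) inferInstance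

/-- The collection of events in the σ-field `B_{T'}` of the stopping time `T'`. -/
def stopSetsK (T' : (ℕ → I × ℝ) → ℕ∞) : Set (Set (ℕ → I × ℝ)) :=
  {B | MeasurableSet B ∧ ∀ n : ℕ, MeasurableSet[coordSAK I n] (B ∩ {w | T' w ≤ (n : ℕ∞)})}

/-- `P` regenerates at the stopping time `T'` with restart laws `(Ps s : s ∈ S)`:
`X_{T'} ∈ S` a.s. on `{T' < ∞}`, and for every bounded measurable `h`,
`E[1_{T' < ∞} · h ∘ Θ_{T'} ∣ B_{T'}] = 1_{T' < ∞} · E_{X_{T'}}(h)` `P`-a.s., expressed by the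
defining integral identity over all events of `B_{T'}`. -/
def RegenK (S : Finset I) (T' : (ℕ → I × ℝ) → ℕ∞) (Ps : I → Measure (ℕ → I × ℝ))
    (P : Measure (ℕ → I × ℝ)) : Prop :=
  P ({w | T' w < ⊤} ∩ {w | (w (T' w).toNat).1 ∉ (S : Set I)}) = 0 ∧
  ∀ h : (ℕ → I × ℝ) → ℝ, Measurable h → (∃ M, ∀ y, |h y| ≤ M) →
    ∀ B ∈ stopSetsK T',
      ∫ w in B ∩ {w | T' w < ⊤}, h (shiftK (T' w).toNat w) ∂P =
      ∫ w in B ∩ {w | T' w < ⊤}, (∫ y, h y ∂ Ps ((w (T' w).toNat).1)) ∂P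

/-- The transition matrix entries `q†_{s s'} = P*†_s(X_𝒯 = s')`. -/
noncomputable def qmatK (S : Finset I) (sim : I → I → Prop) (Rs : I → Set ℝ)
    (Ps : I → Measure (ℕ → I × ℝ)) (s s' : I) : ℝ≥0∞ :=
  Ps s {w | hitTK S sim Rs w < ⊤ ∧ (w (hitTK S sim Rs w).toNat).1 = s'}

section Helpers

variable (S : Finset I) (sim : I → I → Prop) (Rs : I → Set ℝ)

/-- The event that the chain hits a different class exactly at time `n`. -/
def hitSetK (n : ℕ) : Set (ℕ → I × ℝ) :=
  {w | 0 < n ∧ (w n).1 ∈ S ∧ (w n).2 ∈ Rs ((w n).1) ∧ ¬ sim ((w 0).1) ((w n).1)}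

open scoped Classical in
lemma hitTK_eq (w : ℕ → I × ℝ) :
    hitTK S sim Rs w =
      if h : ∃ n, w ∈ hitSetK S sim Rs n then ((sInf {n | w ∈ hitSetK S sim Rs n} : ℕ) : ℕ∞)
      else ⊤ := by
  have hset : {n : ℕ | 0 < n ∧ (w n).1 ∈ S ∧ (w n).2 ∈ Rs ((w n).1) ∧
      ¬ sim ((w 0).1) ((w n).1)} = {n | w ∈ hitSetK S sim Rs n} := rfl
  rw [hitTK, hset]
  split_ifs with h
  · refine le_antisymm (sInf_le ⟨_, Nat.sInf_mem h, rfl⟩) (le_sInf ?_)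
    rintro b ⟨m, hm, rfl⟩
    simpa using (Nat.cast_le (α := ℕ∞)).2 (Nat.sInf_le hm)
  · have : {n | w ∈ hitSetK S sim Rs n} = ∅ := by
      ext n; simp only [Set.mem_setOf_eq, Set.mem_empty_iff_false, iff_false]
      exact fun hn => h ⟨n, hn⟩
    rw [this, Set.image_empty, sInf_empty]

lemma lt_hitTK_iff (n : ℕ) (w : ℕ → I × ℝ) :
    (n : ℕ∞) < hitTK S sim Rs w ↔ ∀ m ≤ n, w ∉ hitSetK S sim Rs m := by
  rw [hitTK_eq]
  split_ifs with h
  · rw [Nat.cast_lt]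
    constructor
    · intro hlt m hm hmem
      exact Nat.notMem_of_lt_sInf (lt_of_le_of_lt hm hlt) hmem
    · intro H
      rcases lt_or_ge n (sInf {n | w ∈ hitSetK S sim Rs n}) with h' | h'
      · exact h'
      · exact absurd (Nat.sInf_mem h) (H _ h')
  · have htop : (n : ℕ∞) < ⊤ := lt_top_iff_ne_top.2 (by simp)
    exact ⟨fun _ m _ hm => h ⟨m, hm⟩, fun _ => htop⟩

lemma hitTK_eq_coe_iff (n : ℕ) (w : ℕ → I × ℝ) :
    hitTK S sim Rs w = (n : ℕ∞) ↔
      w ∈ hitSetK S sim Rs n ∧ ∀ m < n, w ∉ hitSetK S sim Rs m := by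
  rw [hitTK_eq]
  split_ifs with h
  · rw [Nat.cast_inj]
    constructor
    · rintro rfl
      exact ⟨Nat.sInf_mem h, fun m hm => Nat.notMem_of_lt_sInf hm⟩
    · rintro ⟨h1, h2⟩
      refine le_antisymm (Nat.sInf_le h1) (le_of_not_gt fun hc => h2 _ hc (Nat.sInf_mem h))
  · have hn : w ∉ hitSetK S sim Rs n := fun hn => h ⟨n, hn⟩
    simp [hn]

lemma zero_lt_hitTK (w : ℕ → I × ℝ) : (0 : ℕ∞) < hitTK S sim Rs w := by
  rw [show ((0:ℕ∞)) = ((0:ℕ) : ℕ∞) by rfl, lt_hitTK_iff]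
  intro m hm hmem
  have := hmem.1; omega

lemma hitTK_le_iff (n : ℕ) (w : ℕ → I × ℝ) :
    hitTK S sim Rs w ≤ (n : ℕ∞) ↔ ∃ m ≤ n, w ∈ hitSetK S sim Rs m := by
  rw [← not_lt, lt_hitTK_iff]
  push_neg
  rfl

end Helpers
section Meas

variable (S : Finset I) (sim : I → I → Prop) (Rs : I → Set ℝ)

lemma measurable_shiftK (q : ℕ) : Measurable (shiftK (I := I) q) :=
  measurable_pi_lambda _ fun n => measurable_pi_apply (n + q)

lemma shiftK_shiftK (q q' : ℕ) (w : ℕ → I × ℝ) :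
    shiftK q (shiftK q' w) = shiftK (q' + q) w := by
  funext n; simp only [shiftK]; ring_nf

lemma measurableSet_hitSetK [MeasurableSingletonClass I] [Countable I]
    {m' : MeasurableSpace (ℕ → I × ℝ)}
    (hRmeas : ∀ s ∈ S, MeasurableSet (Rs s)) (n : ℕ)
    (h0 : Measurable[m'] fun w : ℕ → I × ℝ => w 0)
    (hn : Measurable[m'] fun w : ℕ → I × ℝ => w n) :
    MeasurableSet[m'] (hitSetK S sim Rs n) := by
  have heq : hitSetK S sim Rs n =
      ⋃ s ∈ (S : Set I), ⋃ i ∈ {i : I | ¬ sim i s},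
        ({w : ℕ → I × ℝ | 0 < n} ∩ (fun w : ℕ → I × ℝ => (w 0).1) ⁻¹' {i}
          ∩ (fun w : ℕ → I × ℝ => (w n).1) ⁻¹' {s}
          ∩ (fun w : ℕ → I × ℝ => (w n).2) ⁻¹' Rs s) := by
    ext w
    simp only [hitSetK, Set.mem_iUnion, Set.mem_inter_iff, Set.mem_preimage,
      Set.mem_setOf_eq, Set.mem_singleton_iff, exists_prop]
    constructor
    · rintro ⟨hn0, hSm, hR, hsm⟩
      exact ⟨(w n).1, hSm, (w 0).1, hsm, ⟨⟨⟨hn0, rfl⟩, rfl⟩, hR⟩⟩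
    · rintro ⟨s, hs, i, hi, ⟨⟨⟨hn0, h0'⟩, hn'⟩, hR⟩⟩
      exact ⟨hn0, by rw [hn']; exact hs, by rw [hn']; exact hR,
        by rw [h0', hn']; exact hi⟩
  rw [heq]
  refine MeasurableSet.biUnion (S : Set I).to_countable fun s hs =>
    MeasurableSet.biUnion (Set.to_countable _) fun i _ => ?_
  have m0 : Measurable[m'] fun w : ℕ → I × ℝ => (w 0).1 := measurable_fst.comp h0
  have mn1 : Measurable[m'] fun w : ℕ → I × ℝ => (w n).1 := measurable_fst.comp hn
  have mn2 : Measurable[m'] fun w : ℕ → I × ℝ => (w n).2 := measurable_snd.comp hn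
  exact (((MeasurableSet.const _).inter (m0 (measurableSet_singleton i))).inter
    (mn1 (measurableSet_singleton s))).inter (mn2 (hRmeas s hs))

lemma measurable_coordSAK_eval (k n : ℕ) (hk : k ≤ n) :
    Measurable[coordSAK I n] fun w : ℕ → I × ℝ => w k := by
  rw [measurable_iff_comap_le]
  exact le_iSup_of_le k (le_iSup_of_le hk le_rfl)

variable [MeasurableSingletonClass I] [Countable I]

lemma measurableSet_Tgt (hRmeas : ∀ s ∈ S, MeasurableSet (Rs s)) (n : ℕ) :
    MeasurableSet {w : ℕ → I × ℝ | (n : ℕ∞) < hitTK S sim Rs w} := by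
  have : {w : ℕ → I × ℝ | (n : ℕ∞) < hitTK S sim Rs w} =
      ⋂ m, ⋂ (_ : m ≤ n), (hitSetK S sim Rs m)ᶜ := by
    ext w; simp [lt_hitTK_iff]
  rw [this]
  exact MeasurableSet.iInter fun m => MeasurableSet.iInter fun _ =>
    (measurableSet_hitSetK S sim Rs hRmeas m (measurable_pi_apply 0)
      (measurable_pi_apply m)).compl

lemma measurableSet_Teq (hRmeas : ∀ s ∈ S, MeasurableSet (Rs s)) (n : ℕ) :
    MeasurableSet {w : ℕ → I × ℝ | hitTK S sim Rs w = (n : ℕ∞)} := by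
  have : {w : ℕ → I × ℝ | hitTK S sim Rs w = (n : ℕ∞)} =
      hitSetK S sim Rs n ∩ ⋂ m, ⋂ (_ : m < n), (hitSetK S sim Rs m)ᶜ := by
    ext w; simp [hitTK_eq_coe_iff]
  rw [this]
  exact (measurableSet_hitSetK S sim Rs hRmeas n (measurable_pi_apply 0)
      (measurable_pi_apply n)).inter
    (MeasurableSet.iInter fun m => MeasurableSet.iInter fun _ =>
      (measurableSet_hitSetK S sim Rs hRmeas m (measurable_pi_apply 0)
        (measurable_pi_apply m)).compl)

lemma coordSAK_le_hitle (hRmeas : ∀ s ∈ S, MeasurableSet (Rs s)) (n : ℕ) :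
    MeasurableSet[coordSAK I n] {w : ℕ → I × ℝ | hitTK S sim Rs w ≤ (n : ℕ∞)} := by
  have : {w : ℕ → I × ℝ | hitTK S sim Rs w ≤ (n : ℕ∞)} =
      ⋃ m, ⋃ (_ : m ≤ n), hitSetK S sim Rs m := by
    ext w; simp [hitTK_le_iff]
  rw [this]
  refine MeasurableSet.iUnion fun m => MeasurableSet.iUnion fun hm => ?_
  exact measurableSet_hitSetK S sim Rs hRmeas m
    (measurable_coordSAK_eval 0 n (Nat.zero_le n)) (measurable_coordSAK_eval m n hm)

lemma univ_mem_stopSetsK (hRmeas : ∀ s ∈ S, MeasurableSet (Rs s)) :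
    Set.univ ∈ stopSetsK (I := I) (hitTK S sim Rs) := by
  refine ⟨MeasurableSet.univ, fun n => ?_⟩
  rw [Set.univ_inter]
  exact coordSAK_le_hitle S sim Rs hRmeas n

end Meas
section Decomp

variable (S : Finset I) (sim : I → I → Prop) (Rs : I → Set ℝ)

lemma shiftK_zero (w : ℕ → I × ℝ) : shiftK 0 w = w := by
  funext n; simp [shiftK]

lemma hitTK_lt_top_mem {w : ℕ → I × ℝ} (h : hitTK S sim Rs w < ⊤) :
    w ∈ hitSetK S sim Rs (hitTK S sim Rs w).toNat := by
  classical
  rw [hitTK_eq] at h ⊢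
  split_ifs at h ⊢ with hex
  · rw [ENat.toNat_natCast]
    exact Nat.sInf_mem hex
  · exact absurd h (lt_irrefl ⊤)

lemma lawPK_apply (Pd : I → Measure (ℕ → I × ℝ)) (π : I → ℝ≥0)
    {B : Set (ℕ → I × ℝ)} (hB : MeasurableSet B) :
    lawPK S sim Rs π Pd B =
      ∑ s ∈ S, (π s : ℝ≥0∞) *
        ∑' n : ℕ, Pd s (shiftK n ⁻¹' B ∩ {w | (n : ℕ∞) < hitTK S sim Rs w}) := by
  rw [lawPK, Measure.finset_sum_apply]
  refine Finset.sum_congr rfl fun s _ => ?_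
  rw [Measure.smul_apply, Measure.sum_apply _ hB]
  have hsmul : ∀ x : ℝ≥0∞, (π s) • x = (π s : ℝ≥0∞) * x := fun x => rfl
  rw [hsmul]
  congr 1
  refine tsum_congr fun n => ?_
  rw [Measure.map_apply (measurable_shiftK n) hB,
    Measure.restrict_apply (hB.preimage (measurable_shiftK n))]

variable [MeasurableSingletonClass I] [Countable I]

lemma decompA (P : Measure (ℕ → I × ℝ)) (B : Set (ℕ → I × ℝ)) :
    ∑' n : ℕ, P (shiftK n ⁻¹' B ∩ {w | (n : ℕ∞) < hitTK S sim Rs w}) =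
      P B + ∑' n : ℕ, P (shiftK (n + 1) ⁻¹' B ∩ {w | ((n + 1 : ℕ) : ℕ∞) < hitTK S sim Rs w}) := by
  rw [tsum_eq_zero_add' ENNReal.summable]
  congr 1
  have h1 : shiftK (I := I) 0 ⁻¹' B = B := by
    ext w; simp [shiftK_zero]
  have h2 : {w : ℕ → I × ℝ | ((0 : ℕ) : ℕ∞) < hitTK S sim Rs w} = Set.univ := by
    ext w; simpa using zero_lt_hitTK S sim Rs w
  rw [h1, h2, Set.inter_univ]

lemma decompB (hRmeas : ∀ s ∈ S, MeasurableSet (Rs s)) (P : Measure (ℕ → I × ℝ))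
    {B : Set (ℕ → I × ℝ)} (hB : MeasurableSet B) :
    ∑' n : ℕ, P (shiftK (n + 1) ⁻¹' B ∩ {w | (n : ℕ∞) < hitTK S sim Rs w}) =
      (∑' n : ℕ, P (shiftK (n + 1) ⁻¹' B ∩ {w | ((n + 1 : ℕ) : ℕ∞) < hitTK S sim Rs w})) +
      ∑' n : ℕ, P (shiftK (n + 1) ⁻¹' B ∩ {w | hitTK S sim Rs w = ((n + 1 : ℕ) : ℕ∞)}) := by
  rw [← ENNReal.tsum_add]
  refine tsum_congr fun n => ?_
  have hsplit : shiftK (n + 1) ⁻¹' B ∩ {w | (n : ℕ∞) < hitTK S sim Rs w} =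
      (shiftK (n + 1) ⁻¹' B ∩ {w | ((n + 1 : ℕ) : ℕ∞) < hitTK S sim Rs w}) ∪
      (shiftK (n + 1) ⁻¹' B ∩ {w | hitTK S sim Rs w = ((n + 1 : ℕ) : ℕ∞)}) := by
    rw [← Set.inter_union_distrib_left]
    congr 1
    ext w
    simp only [Set.mem_setOf_eq, Set.mem_union]
    constructor
    · intro h
      have h' : ((n + 1 : ℕ) : ℕ∞) ≤ hitTK S sim Rs w := by
        push_cast
        exact Order.add_one_le_of_lt h
      rcases lt_or_eq_of_le h' with h'' | h''
      · exact Or.inl h''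
      · exact Or.inr h''.symm
    · rintro (h | h)
      · refine lt_trans ?_ h
        exact_mod_cast Nat.lt_succ_self n
      · rw [h]
        exact_mod_cast Nat.lt_succ_self n
  rw [hsplit]
  refine measure_union ?_ ?_
  · refine Set.disjoint_left.2 ?_
    rintro w ⟨-, h1⟩ ⟨-, h2⟩
    rw [Set.mem_setOf_eq] at h1 h2
    exact absurd (h2 ▸ h1) (lt_irrefl _)
  · exact (hB.preimage (measurable_shiftK _)).inter (measurableSet_Teq S sim Rs hRmeas _)

lemma C_le_E (hRmeas : ∀ s ∈ S, MeasurableSet (Rs s)) (P : Measure (ℕ → I × ℝ))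
    (B : Set (ℕ → I × ℝ)) :
    ∑' n : ℕ, P (shiftK (n + 1) ⁻¹' B ∩ {w | ((n + 1 : ℕ) : ℕ∞) < hitTK S sim Rs w}) ≤
      hitETK S sim Rs P := by
  have step1 : ∑' n : ℕ, P (shiftK (n + 1) ⁻¹' B ∩ {w | ((n + 1 : ℕ) : ℕ∞) < hitTK S sim Rs w}) ≤
      ∑' n : ℕ, P {w | (n : ℕ∞) < hitTK S sim Rs w} := by
    refine ENNReal.tsum_le_tsum fun n => measure_mono ?_
    refine Set.inter_subset_right.trans fun w hw => ?_
    rw [Set.mem_setOf_eq] at hw ⊢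
    refine lt_trans ?_ hw
    exact_mod_cast Nat.lt_succ_self n
  refine step1.trans ?_
  rw [hitETK]
  have heq : ∀ n : ℕ, P {w | (n : ℕ∞) < hitTK S sim Rs w} =
      ∫⁻ w, ({w : ℕ → I × ℝ | (n : ℕ∞) < hitTK S sim Rs w}).indicator (fun _ => 1) w ∂P :=
    fun n => (lintegral_indicator_one (measurableSet_Tgt S sim Rs hRmeas n)).symm
  simp_rw [heq]
  rw [← lintegral_tsum fun n => ((measurable_const.indicator
    (measurableSet_Tgt S sim Rs hRmeas n)).aemeasurable)]
  refine lintegral_mono fun w => ?_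
  have hind : ∀ n : ℕ, ({w : ℕ → I × ℝ | (n : ℕ∞) < hitTK S sim Rs w}).indicator
      (fun _ => (1 : ℝ≥0∞)) w = if (n : ℕ∞) < hitTK S sim Rs w then 1 else 0 := by
    intro n; rw [Set.indicator_apply]; rfl
  simp_rw [hind]
  generalize hitTK S sim Rs w = t
  rcases t with _ | k
  · exact le_top
  · have hvan : ∀ n ∉ Finset.range k,
        (if ((n : ℕ) : ℕ∞) < ((k : ℕ) : ℕ∞) then (1 : ℝ≥0∞) else 0) = 0 := by
      intro n hn
      rw [if_neg]
      rw [Finset.mem_range] at hn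
      exact fun hc => hn (by exact_mod_cast hc)
    calc ∑' n : ℕ, (if ((n : ℕ) : ℕ∞) < ((k : ℕ) : ℕ∞) then (1 : ℝ≥0∞) else 0)
        = ∑ n ∈ Finset.range k, (if ((n : ℕ) : ℕ∞) < ((k : ℕ) : ℕ∞) then (1 : ℝ≥0∞) else 0) :=
          tsum_eq_sum hvan
      _ ≤ ∑ _n ∈ Finset.range k, (1 : ℝ≥0∞) :=
          Finset.sum_le_sum fun n _ => by split_ifs <;> simp
      _ = (k : ℝ≥0∞) := by simp
      _ = (((k : ℕ) : ℕ∞) : ℝ≥0∞) := by rw [ENat.toENNReal_coe]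

end Decomp
section Regen

variable (S : Finset I) (sim : I → I → Prop) (Rs : I → Set ℝ)
variable [MeasurableSingletonClass I] [Countable I]

lemma measurableSet_Efin (hRmeas : ∀ s ∈ S, MeasurableSet (Rs s)) (s' : I) :
    MeasurableSet {w : ℕ → I × ℝ | hitTK S sim Rs w < ⊤ ∧
      (w (hitTK S sim Rs w).toNat).1 = s'} := by
  have heq : {w : ℕ → I × ℝ | hitTK S sim Rs w < ⊤ ∧ (w (hitTK S sim Rs w).toNat).1 = s'} =
      ⋃ n : ℕ, ({w | hitTK S sim Rs w = (n : ℕ∞)} ∩ {w : ℕ → I × ℝ | (w n).1 = s'}) := by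
    ext w
    simp only [Set.mem_setOf_eq, Set.mem_iUnion, Set.mem_inter_iff]
    constructor
    · rintro ⟨h1, h2⟩
      refine ⟨(hitTK S sim Rs w).toNat, ?_, h2⟩
      exact (ENat.coe_toNat h1.ne).symm
    · rintro ⟨n, h1, h2⟩
      refine ⟨by rw [h1]; exact lt_top_iff_ne_top.2 (by simp), ?_⟩
      rw [h1]
      simpa using h2
  rw [heq]
  refine MeasurableSet.iUnion fun n => (measurableSet_Teq S sim Rs hRmeas n).inter ?_
  exact (measurable_fst.comp (measurable_pi_apply n)) (measurableSet_singleton s')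

lemma regen_step (Pd : I → Measure (ℕ → I × ℝ)) (hdprob : ∀ s ∈ S, IsProbabilityMeasure (Pd s))
    (hRmeas : ∀ s ∈ S, MeasurableSet (Rs s))
    {s : I} (hs : s ∈ S) (hregen : RegenK S (hitTK S sim Rs) Pd (Pd s))
    {B : Set (ℕ → I × ℝ)} (hB : MeasurableSet B) :
    ∑' n : ℕ, Pd s (shiftK (n + 1) ⁻¹' B ∩ {w | hitTK S sim Rs w = ((n + 1 : ℕ) : ℕ∞)}) =
      ∑ s' ∈ S, qmatK S sim Rs Pd s s' * Pd s' B := by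
  classical
  haveI := hdprob s hs
  set T := hitTK S sim Rs with hT
  -- the sets
  set G : Set (ℕ → I × ℝ) := ⋃ n : ℕ, ({w | T w = (n : ℕ∞)} ∩ shiftK n ⁻¹' B) with hG
  have hTeqMeas : ∀ n : ℕ, MeasurableSet {w : ℕ → I × ℝ | T w = (n : ℕ∞)} :=
    measurableSet_Teq S sim Rs hRmeas
  have hGmeas : MeasurableSet G :=
    MeasurableSet.iUnion fun n => (hTeqMeas n).inter (hB.preimage (measurable_shiftK n))
  have hTfinMeas : MeasurableSet {w : ℕ → I × ℝ | T w < ⊤} := by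
    have : {w : ℕ → I × ℝ | T w < ⊤} = ⋃ n : ℕ, {w | T w = (n : ℕ∞)} := by
      ext w
      simp only [Set.mem_setOf_eq, Set.mem_iUnion]
      constructor
      · intro h; exact ⟨(T w).toNat, (ENat.coe_toNat h.ne).symm⟩
      · rintro ⟨n, h⟩; rw [h]; exact lt_top_iff_ne_top.2 (by simp)
    rw [this]; exact MeasurableSet.iUnion fun n => hTeqMeas n
  have hTeqDisj : Pairwise (Function.onFun Disjoint
      fun n : ℕ => {w | T w = (n : ℕ∞)} ∩ shiftK n ⁻¹' B) := by
    intro m n hmn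
    refine Set.disjoint_left.2 ?_
    rintro w ⟨h1, -⟩ ⟨h2, -⟩
    rw [Set.mem_setOf_eq] at h1 h2
    exact hmn (by exact_mod_cast h1.symm.trans h2)
  -- value of the LHS as the measure of G
  have hPG : Pd s G = ∑' n : ℕ,
      Pd s (shiftK (n + 1) ⁻¹' B ∩ {w | T w = ((n + 1 : ℕ) : ℕ∞)}) := by
    rw [hG, measure_iUnion hTeqDisj
      (fun n => (hTeqMeas n).inter (hB.preimage (measurable_shiftK n)))]
    rw [tsum_eq_zero_add' ENNReal.summable]
    have h0 : {w : ℕ → I × ℝ | T w = ((0 : ℕ) : ℕ∞)} ∩ shiftK 0 ⁻¹' B = ∅ := by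
      ext w
      simp only [Set.mem_inter_iff, Set.mem_setOf_eq, Set.mem_empty_iff_false, iff_false,
        not_and]
      intro h
      have h0lt := zero_lt_hitTK S sim Rs w
      rw [show hitTK S sim Rs w = T w from rfl, h] at h0lt
      simp at h0lt
    rw [h0, measure_empty, zero_add]
    exact tsum_congr fun n => by rw [Set.inter_comm]
  -- apply the regeneration property
  obtain ⟨-, hreg2⟩ := hregen
  have hbound : ∃ M : ℝ, ∀ y : ℕ → I × ℝ, |B.indicator (fun _ => (1 : ℝ)) y| ≤ M := by
    refine ⟨1, fun y => ?_⟩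
    by_cases hy : y ∈ B <;> simp [Set.indicator_apply, hy]
  have hmeas_ind : Measurable (B.indicator (fun _ => (1 : ℝ))) :=
    measurable_const.indicator hB
  have key := hreg2 (B.indicator fun _ => (1 : ℝ)) hmeas_ind hbound Set.univ
    (univ_mem_stopSetsK S sim Rs hRmeas)
  rw [Set.univ_inter] at key
  -- LHS of key
  have hLHS : ∫ w in {w | T w < ⊤}, B.indicator (fun _ => (1 : ℝ)) (shiftK (T w).toNat w) ∂Pd s
      = (Pd s G).toReal := by
    have heqon : Set.EqOn (fun w => B.indicator (fun _ => (1 : ℝ)) (shiftK (T w).toNat w))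
        (G.indicator fun _ => (1 : ℝ)) {w | T w < ⊤} := by
      intro w hw
      rw [Set.mem_setOf_eq] at hw
      have hwG : w ∈ G ↔ shiftK (T w).toNat w ∈ B := by
        simp only [hG, Set.mem_iUnion, Set.mem_inter_iff, Set.mem_setOf_eq, Set.mem_preimage]
        constructor
        · rintro ⟨n, h1, h2⟩
          have : (T w).toNat = n := by rw [h1]; simp
          rwa [this]
        · intro h
          exact ⟨(T w).toNat, (ENat.coe_toNat hw.ne).symm, h⟩
      by_cases hwB : shiftK (T w).toNat w ∈ B
      · simp only [Set.indicator_apply, hwB, if_true, hwG.2 hwB, if_pos]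
      · simp only [Set.indicator_apply, hwB, if_false]
        rw [if_neg fun h => hwB (hwG.1 h)]
    rw [setIntegral_congr_fun hTfinMeas heqon, setIntegral_indicator hGmeas]
    have hsub : {w : ℕ → I × ℝ | T w < ⊤} ∩ G = G := by
      refine Set.inter_eq_right.2 fun w hw => ?_
      simp only [hG, Set.mem_iUnion, Set.mem_inter_iff, Set.mem_setOf_eq] at hw ⊢
      obtain ⟨n, h1, -⟩ := hw
      rw [h1]
      exact lt_top_iff_ne_top.2 (by simp)
    rw [hsub, setIntegral_const, smul_eq_mul, mul_one]
    rfl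
  -- RHS of key
  have hXmem : ∀ w : ℕ → I × ℝ, T w < ⊤ → (w (T w).toNat).1 ∈ S := fun w hw =>
    (hitTK_lt_top_mem S sim Rs hw).2.1
  have hcover : {w : ℕ → I × ℝ | T w < ⊤} =
      ⋃ s' ∈ S, {w : ℕ → I × ℝ | T w < ⊤ ∧ (w (T w).toNat).1 = s'} := by
    ext w
    simp only [Set.mem_setOf_eq, Set.mem_iUnion, exists_prop]
    constructor
    · intro h; exact ⟨(w (T w).toNat).1, hXmem w h, h, rfl⟩
    · rintro ⟨s', -, h, -⟩; exact h
  have hEmeas : ∀ s' ∈ S, MeasurableSet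
      {w : ℕ → I × ℝ | T w < ⊤ ∧ (w (T w).toNat).1 = s'} :=
    fun s' _ => measurableSet_Efin S sim Rs hRmeas s'
  have hEdisj : (S : Set I).Pairwise (Function.onFun Disjoint
      fun s' => {w : ℕ → I × ℝ | T w < ⊤ ∧ (w (T w).toNat).1 = s'}) := by
    intro a _ b _ hab
    refine Set.disjoint_left.2 ?_
    rintro w ⟨-, h1⟩ ⟨-, h2⟩
    exact hab (h1.symm.trans h2)
  have hconst : ∀ s' ∈ S, Set.EqOn
      (fun w : ℕ → I × ℝ => ∫ y, B.indicator (fun _ => (1 : ℝ)) y ∂Pd ((w (T w).toNat).1))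
      (fun _ => (Pd s' B).toReal) {w : ℕ → I × ℝ | T w < ⊤ ∧ (w (T w).toNat).1 = s'} := by
    intro s' _ w hw
    rw [Set.mem_setOf_eq] at hw
    simp only [hw.2]
    rw [integral_indicator_const _ hB, smul_eq_mul, mul_one]
    rfl
  have hRHS : ∫ w in {w | T w < ⊤},
        (∫ y, B.indicator (fun _ => (1 : ℝ)) y ∂Pd ((w (T w).toNat).1)) ∂Pd s =
      ∑ s' ∈ S, (qmatK S sim Rs Pd s s').toReal * (Pd s' B).toReal := by
    rw [hcover, integral_biUnion_finset S hEmeas hEdisj]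
    · refine Finset.sum_congr rfl fun s' hs' => ?_
      rw [setIntegral_congr_fun (hEmeas s' hs') (hconst s' hs'), setIntegral_const,
        smul_eq_mul]
      rfl
    · intro s' hs'
      refine IntegrableOn.congr_fun ?_ (hconst s' hs').symm (hEmeas s' hs')
      exact integrableOn_const (measure_lt_top _ _).ne
  -- combine
  rw [← hPG]
  have hfin1 : Pd s G ≠ ⊤ := measure_ne_top _ _
  have hfin2 : ∑ s' ∈ S, qmatK S sim Rs Pd s s' * Pd s' B ≠ ⊤ := by
    refine (lt_top_iff_ne_top.1 ?_)
    refine ENNReal.sum_lt_top.2 fun s' hs' => ?_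
    haveI := hdprob s' hs'
    exact ENNReal.mul_lt_top (lt_top_iff_ne_top.1 (measure_lt_top _ _)).lt_top
      (measure_lt_top _ _)
  refine (ENNReal.toReal_eq_toReal_iff' hfin1 hfin2).1 ?_
  rw [← hLHS, key, hRHS, ENNReal.toReal_sum]
  · refine Finset.sum_congr rfl fun s' hs' => ?_
    haveI := hdprob s' hs'
    rw [ENNReal.toReal_mul]
  · intro s' hs'
    haveI := hdprob s' hs'
    exact ENNReal.mul_ne_top (measure_ne_top _ _) (measure_ne_top _ _)

end Regen
section Delta

variable {S : Finset I} {Rs : I → Set ℝ}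

lemma start_one [MeasurableSingletonClass I] {Pd : I → Measure (ℕ → I × ℝ)}
    (hRsub : ∀ s ∈ S, Rs s ⊆ Set.Icc (0 : ℝ) 1)
    (hRpos : ∀ s ∈ S, 0 < volume (Rs s))
    (hunif : ∀ s ∈ S, ∀ R' : Set ℝ, MeasurableSet R' →
      Pd s {w | (w 0).1 = s ∧ (w 0).2 ∈ R'} = volume (R' ∩ Rs s) / volume (Rs s))
    {s : I} (hs : s ∈ S) :
    Pd s {w : ℕ → I × ℝ | (w 0).1 = s} = 1 := by
  have h1 := hunif s hs Set.univ MeasurableSet.univ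
  have hset : {w : ℕ → I × ℝ | (w 0).1 = s ∧ (w 0).2 ∈ Set.univ} =
      {w : ℕ → I × ℝ | (w 0).1 = s} := by ext w; simp
  have hfin : volume (Rs s) ≠ ⊤ := by
    refine ((measure_mono (hRsub s hs)).trans_lt ?_).ne
    rw [Real.volume_Icc]
    exact lt_top_iff_ne_top.2 (by simp)
  rw [hset, Set.univ_inter, ENNReal.div_self (hRpos s hs).ne' hfin] at h1
  exact h1

lemma start_zero [MeasurableSingletonClass I] {Pd : I → Measure (ℕ → I × ℝ)}
    (hdprob : ∀ s ∈ S, IsProbabilityMeasure (Pd s))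
    (hRsub : ∀ s ∈ S, Rs s ⊆ Set.Icc (0 : ℝ) 1)
    (hRpos : ∀ s ∈ S, 0 < volume (Rs s))
    (hunif : ∀ s ∈ S, ∀ R' : Set ℝ, MeasurableSet R' →
      Pd s {w | (w 0).1 = s ∧ (w 0).2 ∈ R'} = volume (R' ∩ Rs s) / volume (Rs s))
    {s' : I} (hs' : s' ∈ S) {s : I} (hne : s ≠ s') :
    Pd s' {w : ℕ → I × ℝ | (w 0).1 = s} = 0 := by
  haveI := hdprob s' hs'
  have hmeas : MeasurableSet {w : ℕ → I × ℝ | (w 0).1 = s'} :=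
    (measurable_fst.comp (measurable_pi_apply 0)) (measurableSet_singleton s')
  have hcompl : Pd s' {w : ℕ → I × ℝ | (w 0).1 = s'}ᶜ = 0 := by
    rw [measure_compl hmeas (measure_ne_top _ _), start_one hRsub hRpos hunif hs',
      measure_univ, tsub_self]
  refine measure_mono_null ?_ hcompl
  intro w hw
  simp only [Set.mem_setOf_eq] at hw
  simp only [Set.mem_compl_iff, Set.mem_setOf_eq, hw]
  exact hne

end Delta
/-- If each `P*†_s` starts at `s` with `Z_0` uniform on `R_s`, reaches a different class in an
a.s. finite time with finite mean, and regenerates at `𝒯`, and if `π† > 0` is normalized by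
`∑ π†_s E*†_s(𝒯) = 1`, then the probability measure `ℙ*†` is shift-stationary iff `π†` is
invariant for the matrix `Q† = (P*†_s(X_𝒯 = s'))`. -/
theorem stmt_17 [Fintype I] [MeasurableSingletonClass I]
    (S : Finset I) (hS : S.Nonempty) (hSc : ∃ i : I, i ∉ S)
    (sim : I → I → Prop) (hsim : Equivalence sim)
    (Rs : I → Set ℝ) (hRmeas : ∀ s ∈ S, MeasurableSet (Rs s))
    (hRsub : ∀ s ∈ S, Rs s ⊆ Set.Icc (0 : ℝ) 1)
    (hRpos : ∀ s ∈ S, 0 < volume (Rs s))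
    (Pd : I → Measure (ℕ → I × ℝ)) (hdprob : ∀ s ∈ S, IsProbabilityMeasure (Pd s))
    (hunif : ∀ s ∈ S, ∀ R' : Set ℝ, MeasurableSet R' →
      Pd s {w | (w 0).1 = s ∧ (w 0).2 ∈ R'} = volume (R' ∩ Rs s) / volume (Rs s))
    (hTKfin : ∀ s ∈ S, Pd s {w | hitTK S sim Rs w < ⊤} = 1)
    (hETfin : ∀ s ∈ S, hitETK S sim Rs (Pd s) < ⊤)
    (hregen : ∀ s ∈ S, RegenK S (hitTK S sim Rs) Pd (Pd s))
    (π : I → ℝ≥0) (hπ : ∀ s ∈ S, 0 < π s)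
    (hnorm : ∑ s ∈ S, (π s : ℝ≥0∞) * hitETK S sim Rs (Pd s) = 1) :
    (lawPK S sim Rs π Pd).map (shiftK 1) = lawPK S sim Rs π Pd ↔
      ∀ s ∈ S, (π s : ℝ≥0∞) = ∑ s' ∈ S, (π s' : ℝ≥0∞) * qmatK S sim Rs Pd s' s := by
  classical
  have hmShift : Measurable (shiftK (I := I) 1) := measurable_shiftK 1
  -- the common ("remainder") part of both decompositions
  have key1 : ∀ B : Set (ℕ → I × ℝ), MeasurableSet B →
      lawPK S sim Rs π Pd B =
        (∑ s ∈ S, (π s : ℝ≥0∞) * Pd s B) +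
        ∑ s ∈ S, (π s : ℝ≥0∞) * ∑' n : ℕ,
          Pd s (shiftK (n + 1) ⁻¹' B ∩ {w | ((n + 1 : ℕ) : ℕ∞) < hitTK S sim Rs w}) := by
    intro B hB
    rw [lawPK_apply S sim Rs Pd π hB, ← Finset.sum_add_distrib]
    refine Finset.sum_congr rfl fun s _ => ?_
    rw [decompA S sim Rs (Pd s) B, mul_add]
  have key2 : ∀ B : Set (ℕ → I × ℝ), MeasurableSet B →
      lawPK S sim Rs π Pd (shiftK 1 ⁻¹' B) =
        (∑ s ∈ S, (π s : ℝ≥0∞) * ∑ s' ∈ S, qmatK S sim Rs Pd s s' * Pd s' B) +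
        ∑ s ∈ S, (π s : ℝ≥0∞) * ∑' n : ℕ,
          Pd s (shiftK (n + 1) ⁻¹' B ∩ {w | ((n + 1 : ℕ) : ℕ∞) < hitTK S sim Rs w}) := by
    intro B hB
    rw [lawPK_apply S sim Rs Pd π (hB.preimage hmShift), ← Finset.sum_add_distrib]
    have hpre : ∀ n : ℕ, shiftK n ⁻¹' (shiftK 1 ⁻¹' B) = shiftK (n + 1) ⁻¹' B := by
      intro n; ext w
      simp only [Set.mem_preimage, shiftK_shiftK]
    refine Finset.sum_congr rfl fun s hs => ?_
    simp_rw [hpre]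
    rw [decompB S sim Rs hRmeas (Pd s) hB,
      regen_step S sim Rs Pd hdprob hRmeas hs (hregen s hs) hB, mul_add, add_comm]
  have keyC : ∀ B : Set (ℕ → I × ℝ),
      (∑ s ∈ S, (π s : ℝ≥0∞) * ∑' n : ℕ,
        Pd s (shiftK (n + 1) ⁻¹' B ∩ {w | ((n + 1 : ℕ) : ℕ∞) < hitTK S sim Rs w})) ≠ ⊤ := by
    intro B
    refine (lt_top_iff_ne_top.1 (ENNReal.sum_lt_top.2 fun s hs => ?_))
    refine ENNReal.mul_lt_top (by simp) ?_
    exact lt_of_le_of_lt (C_le_E S sim Rs hRmeas (Pd s) B) (hETfin s hs)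
  constructor
  · -- stationary → invariant
    intro hst s hsS
    have hBs : MeasurableSet {w : ℕ → I × ℝ | (w 0).1 = s} :=
      (measurable_fst.comp (measurable_pi_apply 0)) (measurableSet_singleton s)
    have happ : lawPK S sim Rs π Pd (shiftK 1 ⁻¹' {w : ℕ → I × ℝ | (w 0).1 = s}) =
        lawPK S sim Rs π Pd {w : ℕ → I × ℝ | (w 0).1 = s} := by
      conv_rhs => rw [← hst]
      rw [Measure.map_apply hmShift hBs]
    rw [key2 _ hBs, key1 _ hBs] at happ
    have hmain : (∑ s' ∈ S, (π s' : ℝ≥0∞) *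
          ∑ s'' ∈ S, qmatK S sim Rs Pd s' s'' * Pd s'' {w : ℕ → I × ℝ | (w 0).1 = s}) =
        ∑ s' ∈ S, (π s' : ℝ≥0∞) * Pd s' {w : ℕ → I × ℝ | (w 0).1 = s} := by
      have hC := keyC {w : ℕ → I × ℝ | (w 0).1 = s}
      exact (ENNReal.add_left_inj hC).1 happ
    have hdelta : ∀ s' ∈ S, Pd s' {w : ℕ → I × ℝ | (w 0).1 = s} =
        if s' = s then 1 else 0 := by
      intro s' hs'
      by_cases h : s' = s
      · subst h
        rw [if_pos rfl, start_one hRsub hRpos hunif hs']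
      · rw [if_neg h, start_zero hdprob hRsub hRpos hunif hs' (Ne.symm h)]
    calc (π s : ℝ≥0∞) = ∑ s' ∈ S, (π s' : ℝ≥0∞) * Pd s' {w : ℕ → I × ℝ | (w 0).1 = s} := by
          rw [Finset.sum_eq_single_of_mem s hsS]
          · rw [hdelta s hsS, if_pos rfl, mul_one]
          · intro s' hs' hne
            rw [hdelta s' hs', if_neg hne, mul_zero]
      _ = ∑ s' ∈ S, (π s' : ℝ≥0∞) *
            ∑ s'' ∈ S, qmatK S sim Rs Pd s' s'' * Pd s'' {w : ℕ → I × ℝ | (w 0).1 = s} :=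
          hmain.symm
      _ = ∑ s' ∈ S, (π s' : ℝ≥0∞) * qmatK S sim Rs Pd s' s := by
          refine Finset.sum_congr rfl fun s' hs' => ?_
          congr 1
          rw [Finset.sum_eq_single_of_mem s hsS]
          · rw [hdelta s hsS, if_pos rfl, mul_one]
          · intro s'' hs'' hne
            rw [hdelta s'' hs'', if_neg hne, mul_zero]
  · -- invariant → stationary
    intro hinv
    refine Measure.ext fun B hB => ?_
    rw [Measure.map_apply hmShift hB, key2 B hB, key1 B hB]
    congr 1
    calc ∑ s ∈ S, (π s : ℝ≥0∞) * ∑ s' ∈ S, qmatK S sim Rs Pd s s' * Pd s' B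
        = ∑ s ∈ S, ∑ s' ∈ S, ((π s : ℝ≥0∞) * qmatK S sim Rs Pd s s') * Pd s' B := by
          refine Finset.sum_congr rfl fun s _ => ?_
          rw [Finset.mul_sum]
          exact Finset.sum_congr rfl fun s' _ => (mul_assoc _ _ _).symm
      _ = ∑ s' ∈ S, (∑ s ∈ S, (π s : ℝ≥0∞) * qmatK S sim Rs Pd s s') * Pd s' B := by
          rw [Finset.sum_comm]
          exact Finset.sum_congr rfl fun s' _ => (Finset.sum_mul _ _ _).symm
      _ = ∑ s' ∈ S, (π s' : ℝ≥0∞) * Pd s' B := by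
          refine Finset.sum_congr rfl fun s' hs' => ?_
          rw [← hinv s' hs']
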